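/- For κ > 1 and γ₁, γ₂ ∈ (0,1) with γ₁+γ₂ < 1, the number p* := (√(κ²(1-γ₁-γ₂)² + (γ₁-γ₂)² + 2κ(γ₁(1-γ₁)+γ₂(1-γ₂))) - 1)/(2(κ-1)) - (1-γ₁-γ₂)/2 satisfies the quadratic equation κ·p·(1+p-γ₁-γ₂) = (γ₁-p)(γ₂-p) and lies in the interval [max{0, γ₁+γ₂-1}, min{γ₁, γ₂}]. -/
import Mathlib

set_option maxHeartbeats 1000000


noncomputable def pStar (κ γ1 γ2 : ℝ) : ℝ :=
  (Real.sqrt (κ ^ 2 * (1 - γ1 - γ2) ^ 2 + (γ1 - γ2) ^ 2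
      + 2 * κ * (γ1 * (1 - γ1) + γ2 * (1 - γ2))) - 1) / (2 * (κ - 1))
    - (1 - γ1 - γ2) / 2

theorem stmt_11 (κ γ1 γ2 : ℝ) (hκ : 1 < κ)
    (hγ1 : 0 < γ1) (hγ1' : γ1 < 1) (hγ2 : 0 < γ2) (hγ2' : γ2 < 1)
    (hsum : γ1 + γ2 < 1) :
    κ * pStar κ γ1 γ2 * (1 + pStar κ γ1 γ2 - γ1 - γ2)
      = (γ1 - pStar κ γ1 γ2) * (γ2 - pStar κ γ1 γ2) ∧
    pStar κ γ1 γ2 ∈ Set.Icc (max 0 (γ1 + γ2 - 1)) (min γ1 γ2) := by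
  have hκ1 : (0:ℝ) < κ - 1 := by linarith
  have hD0 : 0 ≤ κ ^ 2 * (1 - γ1 - γ2) ^ 2 + (γ1 - γ2) ^ 2
      + 2 * κ * (γ1 * (1 - γ1) + γ2 * (1 - γ2)) := by
    nlinarith [sq_nonneg (κ*(1-γ1-γ2)), sq_nonneg (γ1-γ2),
      mul_pos hγ1 (sub_pos.mpr hγ1'), mul_pos hγ2 (sub_pos.mpr hγ2')]
  obtain ⟨S, hS0, hS2, hp⟩ :
      ∃ S : ℝ, 0 ≤ S ∧
        S ^ 2 = κ ^ 2 * (1 - γ1 - γ2) ^ 2 + (γ1 - γ2) ^ 2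
          + 2 * κ * (γ1 * (1 - γ1) + γ2 * (1 - γ2)) ∧
        pStar κ γ1 γ2 = (S - 1) / (2 * (κ - 1)) - (1 - γ1 - γ2) / 2 :=
    ⟨_, Real.sqrt_nonneg _, Real.sq_sqrt hD0, rfl⟩
  have hbS : (κ-1)*(1-γ1-γ2)+1 ≤ S := by
    have h1 : 0 < (κ-1)*(1-γ1-γ2)+1 := by nlinarith
    nlinarith [hS2, mul_pos (mul_pos hκ1 hγ1) hγ2]
  constructor
  · rw [hp]
    field_simp
    nlinarith [hS2]
  · refine ⟨?_, ?_⟩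
    · have hmax : max 0 (γ1 + γ2 - 1) = 0 := max_eq_left (by linarith)
      rw [hmax, hp]
      have h2 : 0 ≤ (S - 1) / (2 * (κ - 1)) - (1 - γ1 - γ2) / 2 := by
        rw [sub_nonneg, div_le_div_iff₀ (by linarith) (by linarith)]
        nlinarith
      linarith
    · have hle1 : pStar κ γ1 γ2 ≤ γ1 := by
        rw [hp]
        have hS_le : S ≤ (κ-1)*(1-γ1-γ2)+1 + 2*(κ-1)*γ1 := by
          have h1 : 0 ≤ (κ-1)*(1-γ1-γ2)+1 + 2*(κ-1)*γ1 := by nlinarith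
          have h2 : 0 ≤ (κ-1)*γ1*((κ-1)*(1-γ2)+1-γ2) := by
            apply mul_nonneg (mul_nonneg hκ1.le hγ1.le); nlinarith
          have hsq : S^2 ≤ ((κ-1)*(1-γ1-γ2)+1 + 2*(κ-1)*γ1)^2 := by
            nlinarith [hS2, h2]
          exact (pow_le_pow_iff_left₀ hS0 h1 two_ne_zero).mp hsq
        rw [sub_le_iff_le_add, div_le_iff₀ (by linarith)]
        linarith [hS_le]
      have hle2 : pStar κ γ1 γ2 ≤ γ2 := by
        rw [hp]
        have hS_le : S ≤ (κ-1)*(1-γ1-γ2)+1 + 2*(κ-1)*γ2 := by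
          have h1 : 0 ≤ (κ-1)*(1-γ1-γ2)+1 + 2*(κ-1)*γ2 := by nlinarith
          have h2 : 0 ≤ (κ-1)*γ2*((κ-1)*(1-γ1)+1-γ1) := by
            apply mul_nonneg (mul_nonneg hκ1.le hγ2.le); nlinarith
          have hsq : S^2 ≤ ((κ-1)*(1-γ1-γ2)+1 + 2*(κ-1)*γ2)^2 := by
            nlinarith [hS2, h2]
          exact (pow_le_pow_iff_left₀ hS0 h1 two_ne_zero).mp hsq
        rw [sub_le_iff_le_add, div_le_iff₀ (by linarith)]
        linarith [hS_le]
      exact le_min hle1 hle2
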